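/- For positive integers n_1, ..., n_k with sum n and a nonnegative rational t, let k' be the largest index such that n_{k'} + ... + n_k - t >= 0 (assume such an index exists). Then sum_{i=1}^{k'} n_i * (n_i + n_{i+1} + ... + n_k - t) >= (n - t)*(n - t + 1)/2. -/

import Mathlib

lemma triangular_core (K : ℕ) : ∀ (N : ℕ → ℕ) (A : ℕ → ℚ),
    (∀ i ≤ K, A i = A (i + 1) + N i) → (∀ i ≤ K, 1 ≤ N i) →
    0 ≤ A K → A (K + 1) ≤ 0 →
    A 0 * (A 0 + 1) / 2 ≤ ∑ i ∈ Finset.range (K + 1), (N i : ℚ) * A i := by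
  induction K with
  | zero =>
    intro N A hrec hpos hK hK1
    rw [Finset.sum_range_one]
    have h0 := hrec 0 le_rfl
    have h1 : (1 : ℚ) ≤ N 0 := by exact_mod_cast hpos 0 le_rfl
    nlinarith [mul_nonneg hK (sub_nonneg.mpr h1)]
  | succ K ih =>
    intro N A hrec hpos hK hK1
    rw [Finset.sum_range_succ']
    have IH := ih (fun i => N (i + 1)) (fun i => A (i + 1))
      (fun i hi => hrec (i + 1) (by omega)) (fun i hi => hpos (i + 1) (by omega)) hK hK1
    have h0 := hrec 0 (by omega)
    have h1 : (1 : ℚ) ≤ N 0 := by exact_mod_cast hpos 0 (by omega)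
    have hfirst : (A 0 * (A 0 + 1) - A 1 * (A 1 + 1)) / 2 ≤ (N 0 : ℚ) * A 0 := by
      have h0' : A 0 = A 1 + (N 0 : ℚ) := by simpa using h0
      rw [h0']
      nlinarith [mul_nonneg (sub_nonneg.mpr h1) (le_trans zero_le_one h1)]
    linarith

theorem triangular_count_shifted (k : ℕ) (nn : Fin k → ℕ) (hpos : ∀ i, 0 < nn i)
    (t : ℚ) (ht : 0 ≤ t) (k' : Fin k)
    (hk' : t ≤ (∑ j ∈ Finset.univ.filter (fun j => k' ≤ j), nn j : ℚ))
    (hmax : ∀ i : Fin k, k' < i →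
      ((∑ j ∈ Finset.univ.filter (fun j => i ≤ j), nn j : ℚ)) < t) :
    ((∑ i, nn i : ℚ) - t) * ((∑ i, nn i : ℚ) - t + 1) / 2 ≤
      ∑ i ∈ Finset.univ.filter (fun i => i ≤ k'),
        (nn i : ℚ) * ((∑ j ∈ Finset.univ.filter (fun j => i ≤ j), nn j : ℚ) - t) := by
  classical
  set K := k'.val with hKdef
  have hKk : K < k := k'.isLt
  set N : ℕ → ℕ := fun i => if h : i < k then nn ⟨i, h⟩ else 0 with hN
  set A : ℕ → ℚ := fun i => (∑ j ∈ Finset.Ico i k, (N j : ℚ)) - t with hA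
  -- filter sums equal Ico sums
  have key : ∀ i : Fin k,
      (∑ j ∈ Finset.univ.filter (fun j => i ≤ j), (nn j : ℚ)) =
        ∑ j ∈ Finset.Ico i.val k, (N j : ℚ) := by
    intro i
    rw [Finset.sum_filter]
    have h1 : ∑ j : Fin k, (if i ≤ j then (nn j : ℚ) else 0) =
        ∑ j ∈ Finset.range k, (fun m => if i.val ≤ m then (N m : ℚ) else 0) j := by
      rw [← Fin.sum_univ_eq_sum_range]
      apply Finset.sum_congr rfl
      intro j _
      simp only [N, j.isLt, dif_pos, Fin.le_def]
    rw [h1, ← Finset.sum_filter]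
    congr 1
    ext j
    simp only [Finset.mem_filter, Finset.mem_range, Finset.mem_Ico]
    omega
  have hrec : ∀ i ≤ K, A i = A (i + 1) + N i := by
    intro i hi
    have hik : i < k := by omega
    simp only [hA]
    rw [Finset.sum_eq_sum_Ico_succ_bot hik]
    ring
  have hposN : ∀ i ≤ K, 1 ≤ N i := by
    intro i hi
    have hik : i < k := by omega
    simp only [hN, dif_pos hik]
    exact hpos _
  have hAK : 0 ≤ A K := by
    have := key k'
    simp only [hA]
    rw [← this]
    linarith
  have hAK1 : A (K + 1) ≤ 0 := by
    by_cases h : K + 1 < k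
    · have hm := hmax ⟨K + 1, h⟩ (by simp [Fin.lt_def]; omega)
      rw [key ⟨K + 1, h⟩] at hm
      simp only [hA]
      linarith
    · have : Finset.Ico (K + 1) k = ∅ := by
        apply Finset.Ico_eq_empty
        omega
      simp only [hA, this, Finset.sum_empty]
      linarith
  have core := triangular_core K N A hrec hposN hAK hAK1
  -- total sum equals A 0 + t
  have htotal : (∑ i, (nn i : ℚ)) = ∑ j ∈ Finset.Ico 0 k, (N j : ℚ) := by
    have h1 : ∑ i : Fin k, (nn i : ℚ) =
        ∑ j ∈ Finset.range k, (fun m => if h : m < k then (nn ⟨m, h⟩ : ℚ) else 0) j := by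
      rw [← Fin.sum_univ_eq_sum_range]
      apply Finset.sum_congr rfl
      intro j _
      simp [j.isLt]
    rw [h1]
    rw [show Finset.Ico 0 k = Finset.range k from by ext; simp]
    apply Finset.sum_congr rfl
    intro j hj
    simp only [Finset.mem_range] at hj
    simp [N, hj]
  -- RHS equals the range sum
  have hrhs : (∑ i ∈ Finset.univ.filter (fun i => i ≤ k'),
      (nn i : ℚ) * ((∑ j ∈ Finset.univ.filter (fun j => i ≤ j), nn j : ℚ) - t)) =
      ∑ i ∈ Finset.range (K + 1), (N i : ℚ) * A i := by
    rw [Finset.sum_filter]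
    have h1 : ∑ i : Fin k, (if i ≤ k' then
        (nn i : ℚ) * ((∑ j ∈ Finset.univ.filter (fun j => i ≤ j), nn j : ℚ) - t) else 0) =
        ∑ i ∈ Finset.range k,
          (fun m => if m ≤ K then (N m : ℚ) * A m else 0) i := by
      rw [← Fin.sum_univ_eq_sum_range]
      apply Finset.sum_congr rfl
      intro i _
      by_cases h : i.val ≤ K
      · rw [if_pos (show i ≤ k' from by rwa [Fin.le_def]), if_pos h]
        rw [key i]
        simp only [N, A, i.isLt, dif_pos, Fin.eta]
      · rw [if_neg (fun hc => h (Fin.le_def.mp hc)), if_neg h]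
    rw [h1, ← Finset.sum_filter]
    congr 1
    ext j
    simp only [Finset.mem_filter, Finset.mem_range]
    omega
  rw [hrhs]
  have hA0 : A 0 = (∑ i, (nn i : ℚ)) - t := by
    simp only [hA, htotal]
  push_cast at core ⊢
  rw [← hA0] at *
  convert core using 2
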